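/- Let A ∈ ℝ^{m×d}, y ∈ ℝ^m, λ > 0, and let F(x) = (1/2)‖Ax − y‖₂² + λ‖x‖₁ with L = λ_max(AᵀA) > 0. Let x⋆ be a minimizer of F over ℝ^d, and let {x_k}_{k ≥ 1} be the FISTA iterates started from any x₀ ∈ ℝ^d. Then for every k ≥ 1, F(x_k) − F(x⋆) ≤ 2L·‖x₀ − x⋆‖₂² / (k + 1)². -/

import Mathlib

open Matrix

/-- The Euclidean (`ℓ²`) norm on `ℝ^n`. -/
noncomputable def l2norm {n : ℕ} (x : Fin n → ℝ) : ℝ := Real.sqrt (∑ i, (x i) ^ 2)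

/-- The `ℓ¹` norm on `ℝ^n`. -/
def l1norm {n : ℕ} (x : Fin n → ℝ) : ℝ := ∑ i, |x i|

/-- `Aᵀ * A` is Hermitian (symmetric) for a real matrix `A`. -/
theorem transposeMulSelf_isHermitian {m d : ℕ} (A : Matrix (Fin m) (Fin d) ℝ) :
    (Aᵀ * A).IsHermitian := by
  simpa using Matrix.isHermitian_conjTranspose_mul_self A

/-- `λ_max(AᵀA)`: the largest eigenvalue of `AᵀA`. -/
noncomputable def lamMax {m d : ℕ} (A : Matrix (Fin m) (Fin d) ℝ) : ℝ :=
  ⨆ i, (transposeMulSelf_isHermitian A).eigenvalues i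

/-- The scalar soft-thresholding operator with threshold `a`. -/
noncomputable def softThreshold (z a : ℝ) : ℝ :=
  if z > a then z - a else if z < -a then z + a else 0

/-- The proximal step `p_L(x') = argmin_x {(L/2)‖x − (x' − Aᵀ(Ax' − y)/L)‖₂² + λ‖x‖₁}`, which
equals coordinatewise soft-thresholding of `x' − Aᵀ(Ax' − y)/L` at threshold `λ/L`. -/
noncomputable def proxL {m d : ℕ} (A : Matrix (Fin m) (Fin d) ℝ) (y : Fin m → ℝ)
    (lam L : ℝ) (x' : Fin d → ℝ) : Fin d → ℝ :=
  fun i => softThreshold ((x' - L⁻¹ • Aᵀ.mulVec (A.mulVec x' - y)) i) (lam / L)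

/-- The FISTA state `(x_k, y_{k+1}, t_{k+1})`: starting from `(x_0, y_1, t_1) = (x₀, x₀, 1)`,
with `x_k = p_L(y_k)`, `t_{k+1} = (1 + √(1 + 4t_k²))/2`, and
`y_{k+1} = x_k + ((t_k − 1)/t_{k+1})(x_k − x_{k−1})`. -/
noncomputable def fistaAux {m d : ℕ} (A : Matrix (Fin m) (Fin d) ℝ) (y : Fin m → ℝ)
    (lam L : ℝ) (x0 : Fin d → ℝ) : ℕ → (Fin d → ℝ) × (Fin d → ℝ) × ℝ
  | 0 => (x0, x0, 1)
  | k + 1 =>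
    let s := fistaAux A y lam L x0 k
    let xk := proxL A y lam L s.2.1
    let tk1 := (1 + Real.sqrt (1 + 4 * s.2.2 ^ 2)) / 2
    (xk, xk + ((s.2.2 - 1) / tk1) • (xk - s.1), tk1)

/-- `fista A y lam L x0 k` is the `k`-th FISTA iterate `x_k` (with `x_0 = x0`). -/
noncomputable def fista {m d : ℕ} (A : Matrix (Fin m) (Fin d) ℝ) (y : Fin m → ℝ)
    (lam L : ℝ) (x0 : Fin d → ℝ) (k : ℕ) : Fin d → ℝ :=
  (fistaAux A y lam L x0 k).1


open scoped RealInnerProductSpace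

noncomputable def fdot {n : ℕ} (x y : Fin n → ℝ) : ℝ := ∑ i, x i * y i

lemma sym_dot {d : ℕ} (B : Matrix (Fin d) (Fin d) ℝ) (hB : B.IsHermitian)
    (x y : Fin d → ℝ) : ∑ j, x j * (B.mulVec y) j = ∑ j, (B.mulVec x) j * y j := by
  have hBt : Bᵀ = B := by simpa using hB.eq
  have hent : ∀ i j, B i j = B j i := fun i j => by
    have := congrFun (congrFun hBt i) j
    rw [Matrix.transpose_apply] at this
    exact this.symm
  simp only [Matrix.mulVec, dotProduct, Finset.sum_mul, Finset.mul_sum]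
  rw [Finset.sum_comm]
  refine Finset.sum_congr rfl fun i _ => Finset.sum_congr rfl fun j _ => ?_
  rw [hent i j]; ring

lemma quad_bound {m d : ℕ} (A : Matrix (Fin m) (Fin d) ℝ) (v : Fin d → ℝ) :
    fdot v ((Aᵀ * A).mulVec v) ≤ lamMax A * fdot v v := by
  rcases Nat.eq_zero_or_pos d with hd | hd
  · subst hd; simp [fdot]
  · have hne : Nonempty (Fin d) := ⟨⟨0, hd⟩⟩
    have hB := transposeMulSelf_isHermitian A
    set B := Aᵀ * A with hBdef
    set e := hB.eigenvectorBasis with he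
    set μ := hB.eigenvalues with hμ
    have hμL : ∀ i, μ i ≤ lamMax A := fun i =>
      le_ciSup (Set.finite_range μ).bddAbove i
    have keyj : ∀ i j, (B.mulVec (fun k => e i k)) j = μ i * e i j := by
      intro i j
      have := congrFun (hB.mulVec_eigenvectorBasis i) j
      simpa [WithLp.equiv, Equiv.refl_apply] using this
    have hreprV : ∀ (X : EuclideanSpace ℝ (Fin d)) i, e.repr X i = ∑ j, e i j * X j := by
      intro X i
      rw [OrthonormalBasis.repr_apply_apply]
      simp [PiLp.inner_apply, RCLike.inner_apply, mul_comm]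
    have hX : ∀ i, e.repr (WithLp.toLp 2 (B.mulVec v)) i
        = μ i * e.repr (WithLp.toLp 2 v) i := by
      intro i
      rw [hreprV, hreprV]
      calc ∑ j, e i j * (B.mulVec v) j = ∑ j, (B.mulVec (fun k => e i k)) j * v j :=
            sym_dot B hB _ v
        _ = ∑ j, μ i * (e i j * v j) := by
            refine Finset.sum_congr rfl fun j _ => ?_
            rw [keyj i j]; ring
        _ = μ i * ∑ j, e i j * v j := by rw [Finset.mul_sum]
    have hlhs : fdot v (B.mulVec v)
        = ∑ i, μ i * (e.repr (WithLp.toLp 2 v) i)^2 := by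
      have h2 : fdot v (B.mulVec v) = ⟪(WithLp.toLp 2 v),
          (WithLp.toLp 2 (B.mulVec v))⟫ := by
        simp [fdot, PiLp.inner_apply, RCLike.inner_apply, mul_comm]
      rw [h2, ← e.repr.inner_map_map]
      simp only [PiLp.inner_apply, RCLike.inner_apply, conj_trivial]
      refine Finset.sum_congr rfl fun i _ => ?_
      rw [hX i]; ring
    have hrhs : fdot v v = ∑ i, (e.repr (WithLp.toLp 2 v) i)^2 := by
      have h2 : fdot v v = ⟪(WithLp.toLp 2 v),
          (WithLp.toLp 2 v)⟫ := by
        rw [PiLp.inner_apply]; simp [fdot, sq]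
      rw [h2, ← e.repr.inner_map_map]
      simp only [PiLp.inner_apply, RCLike.inner_apply, conj_trivial]
      exact Finset.sum_congr rfl fun i _ => (sq _).symm
    rw [hlhs, hrhs, Finset.mul_sum]
    exact Finset.sum_le_sum fun i _ => mul_le_mul_of_nonneg_right (hμL i) (sq_nonneg _)

lemma soft_key (a : ℝ) (ha : 0 < a) (z x : ℝ) :
    a * |softThreshold z a| + (z - softThreshold z a) * (x - softThreshold z a) ≤ a * |x| := by
  have hx1 : x ≤ |x| := le_abs_self x
  have hx2 : -x ≤ |x| := neg_le_abs x
  unfold softThreshold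
  split_ifs with h1 h2
  · rw [abs_of_nonneg (by linarith)]
    nlinarith
  · rw [abs_of_nonpos (by linarith)]
    nlinarith
  · push_neg at h1 h2
    have hz : |z| ≤ a := abs_le.mpr ⟨by linarith, h1⟩
    have : z * x ≤ |z| * |x| := le_trans (le_abs_self _) (le_of_eq (abs_mul z x))
    have hxnn : (0:ℝ) ≤ |x| := abs_nonneg x
    have h3 : |z| * |x| ≤ a * |x| := mul_le_mul_of_nonneg_right hz hxnn
    simp only [abs_zero, sub_zero, mul_zero, zero_add]
    linarith

lemma fdot_nonneg {n : ℕ} (x : Fin n → ℝ) : 0 ≤ fdot x x :=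
  Finset.sum_nonneg fun i _ => mul_self_nonneg _

lemma fdot_transpose {m d : ℕ} (A : Matrix (Fin m) (Fin d) ℝ) (w : Fin m → ℝ)
    (q : Fin d → ℝ) : fdot (Aᵀ.mulVec w) q = fdot w (A.mulVec q) := by
  show (Aᵀ *ᵥ w) ⬝ᵥ q = w ⬝ᵥ (A *ᵥ q)
  rw [dotProduct_comm, Matrix.dotProduct_mulVec, Matrix.vecMul_transpose,
    dotProduct_comm]

lemma fexp {m d : ℕ} (A : Matrix (Fin m) (Fin d) ℝ) (y : Fin m → ℝ) (z u : Fin d → ℝ) :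
    fdot (A.mulVec u - y) (A.mulVec u - y)
      = fdot (A.mulVec z - y) (A.mulVec z - y)
        + 2 * fdot (Aᵀ.mulVec (A.mulVec z - y)) (u - z)
        + fdot (A.mulVec (u - z)) (A.mulVec (u - z)) := by
  rw [fdot_transpose]
  have hsplit : A.mulVec u = A.mulVec z + A.mulVec (u - z) := by
    rw [← Matrix.mulVec_add]
    congr 1
    ext i; simp
  rw [hsplit]
  simp only [fdot, Pi.sub_apply, Pi.add_apply, Finset.mul_sum, ← Finset.sum_add_distrib]
  refine Finset.sum_congr rfl fun i _ => by ring

lemma keylem {m d : ℕ} (A : Matrix (Fin m) (Fin d) ℝ) (y : Fin m → ℝ)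
    (lam L : ℝ) (hlam : 0 < lam) (hL : 0 < L)
    (hquad : ∀ v, fdot (A.mulVec v) (A.mulVec v) ≤ L * fdot v v)
    (z x : Fin d → ℝ) :
    L * fdot (proxL A y lam L z - x) (proxL A y lam L z - x)
      + 2 * (1/2 * fdot (A.mulVec (proxL A y lam L z) - y)
              (A.mulVec (proxL A y lam L z) - y) + lam * l1norm (proxL A y lam L z))
    ≤ L * fdot (z - x) (z - x)
      + 2 * (1/2 * fdot (A.mulVec x - y) (A.mulVec x - y) + lam * l1norm x) := by
  have hL' : L ≠ 0 := ne_of_gt hL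
  set g : Fin d → ℝ := Aᵀ.mulVec (A.mulVec z - y) with hg
  set w : Fin d → ℝ := z - L⁻¹ • g with hw
  set p : Fin d → ℝ := proxL A y lam L z with hp
  have hpw : ∀ i, p i = softThreshold (w i) (lam / L) := fun i => rfl
  have e1 : L * (lam / L) = lam := by field_simp
  have hcoord : ∀ i, lam * |p i| + L * ((w i - p i) * (x i - p i)) ≤ lam * |x i| := by
    intro i
    have h := soft_key (lam / L) (div_pos hlam hL) (w i) (x i)
    rw [← hpw i] at h
    have h4 : (w i - p i) * (x i - p i) ≤ lam / L * (|x i| - |p i|) := by linarith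
    have h5 := mul_le_mul_of_nonneg_left h4 hL.le
    have h6 : L * (lam / L * (|x i| - |p i|)) = lam * (|x i| - |p i|) := by
      field_simp
    linarith [h5, h6]
  have h_g : lam * l1norm p + L * fdot (w - p) (x - p) ≤ lam * l1norm x := by
    have hsum := Finset.sum_le_sum (fun i (_ : i ∈ Finset.univ) => hcoord i)
    have e2 : lam * l1norm p + L * fdot (w - p) (x - p)
        = ∑ i, (lam * |p i| + L * ((w i - p i) * (x i - p i))) := by
      simp only [l1norm, fdot, Pi.sub_apply, Finset.mul_sum, ← Finset.sum_add_distrib]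
    have e3 : lam * l1norm x = ∑ i, lam * |x i| := by
      rw [l1norm, Finset.mul_sum]
    rw [e2, e3]
    exact hsum
  have h_fp : fdot (A.mulVec p - y) (A.mulVec p - y)
      ≤ fdot (A.mulVec z - y) (A.mulVec z - y) + 2 * fdot g (p - z)
        + L * fdot (p - z) (p - z) := by
    rw [fexp A y z p]
    have := hquad (p - z)
    linarith
  have h_fx : fdot (A.mulVec z - y) (A.mulVec z - y) + 2 * fdot g (x - z)
      ≤ fdot (A.mulVec x - y) (A.mulVec x - y) := by
    rw [fexp A y z x]
    have := fdot_nonneg (A.mulVec (x - z))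
    linarith
  have hid : L * fdot (p - x) (p - x) + 2 * fdot g (p - z) + L * fdot (p - z) (p - z)
      - 2 * (L * fdot (w - p) (x - p)) - 2 * fdot g (x - z)
      = L * fdot (z - x) (z - x) := by
    rw [hw]
    simp only [fdot, Pi.sub_apply, Pi.smul_apply, smul_eq_mul, Finset.mul_sum,
      ← Finset.sum_sub_distrib, ← Finset.sum_add_distrib]
    refine Finset.sum_congr rfl fun i _ => ?_
    field_simp
    ring
  linarith [h_g, h_fp, h_fx, hid]

lemma idlem {n : ℕ} (t : ℝ) (a b c s : Fin n → ℝ) :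
    t * ((t - 1) * (fdot (b - a) (b - a) - fdot (c - a) (c - a))
      + (fdot (b - s) (b - s) - fdot (c - s) (c - s)))
    = fdot (t • b - (t - 1) • a - s) (t • b - (t - 1) • a - s)
      - fdot (t • c - (t - 1) • a - s) (t • c - (t - 1) • a - s) := by
  simp only [fdot, Pi.sub_apply, Pi.smul_apply, smul_eq_mul, mul_sub, mul_add,
    Finset.mul_sum, ← Finset.sum_sub_distrib, ← Finset.sum_add_distrib]
  refine Finset.sum_congr rfl fun i _ => by ring

lemma tnext_sq (t : ℝ) : ((1 + Real.sqrt (1 + 4 * t ^ 2)) / 2) ^ 2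
    = (1 + Real.sqrt (1 + 4 * t ^ 2)) / 2 + t ^ 2 := by
  have hs := Real.sq_sqrt (show (0:ℝ) ≤ 1 + 4 * t ^ 2 by positivity)
  nlinarith [hs]

lemma tnext_ge (t : ℝ) (ht : 0 ≤ t) :
    t + 1 / 2 ≤ (1 + Real.sqrt (1 + 4 * t ^ 2)) / 2 := by
  have hs := Real.sq_sqrt (show (0:ℝ) ≤ 1 + 4 * t ^ 2 by positivity)
  have hs0 := Real.sqrt_nonneg (1 + 4 * t ^ 2)
  nlinarith [hs, hs0]

lemma normAv {m d : ℕ} (A : Matrix (Fin m) (Fin d) ℝ) (v : Fin d → ℝ) :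
    fdot (A.mulVec v) (A.mulVec v) = fdot v ((Aᵀ * A).mulVec v) := by
  show (A *ᵥ v) ⬝ᵥ (A *ᵥ v) = v ⬝ᵥ ((Aᵀ * A) *ᵥ v)
  rw [← Matrix.mulVec_mulVec, Matrix.dotProduct_mulVec, Matrix.mulVec_transpose,
    dotProduct_comm]

lemma l2norm_sq {n : ℕ} (x : Fin n → ℝ) : l2norm x ^ 2 = fdot x x := by
  rw [l2norm, Real.sq_sqrt (by positivity)]
  simp [fdot, sq]


/-- FISTA convergence rate: with `F(x) = (1/2)‖Ax − y‖₂² + λ‖x‖₁`, `L = λ_max(AᵀA) > 0`,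
`x⋆` a minimizer of `F`, and `{x_k}` the FISTA iterates from `x₀`, one has for all `k ≥ 1`:
`F(x_k) − F(x⋆) ≤ 2L‖x₀ − x⋆‖₂²/(k + 1)²`. -/
theorem stmt6 {m d : ℕ} (A : Matrix (Fin m) (Fin d) ℝ) (y : Fin m → ℝ)
    (lam : ℝ) (hlam : 0 < lam) (hL : 0 < lamMax A)
    (F : (Fin d → ℝ) → ℝ)
    (hF : ∀ x, F x = 1 / 2 * l2norm (A.mulVec x - y) ^ 2 + lam * l1norm x)
    (xstar : Fin d → ℝ) (hmin : ∀ x, F xstar ≤ F x)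
    (x0 : Fin d → ℝ) :
    ∀ k : ℕ, 1 ≤ k →
      F (fista A y lam (lamMax A) x0 k) - F xstar ≤
        2 * lamMax A * l2norm (x0 - xstar) ^ 2 / ((k : ℝ) + 1) ^ 2 := by
  set L := lamMax A with hLdef
  have hquad : ∀ v, fdot (A.mulVec v) (A.mulVec v) ≤ L * fdot v v := fun v => by
    rw [normAv]; exact quad_bound A v
  have hFG : ∀ x, F x = 1 / 2 * fdot (A.mulVec x - y) (A.mulVec x - y) + lam * l1norm x :=
    fun x => by rw [hF, l2norm_sq]
  set X : ℕ → (Fin d → ℝ) := fun k => (fistaAux A y lam L x0 k).1 with hXdef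
  set Y : ℕ → (Fin d → ℝ) := fun k => (fistaAux A y lam L x0 k).2.1 with hYdef
  set T : ℕ → ℝ := fun k => (fistaAux A y lam L x0 k).2.2 with hTdef
  have hX0 : X 0 = x0 := rfl
  have hY0 : Y 0 = x0 := rfl
  have hT0 : T 0 = 1 := rfl
  have hX : ∀ k, X (k + 1) = proxL A y lam L (Y k) := fun k => by
    simp [hXdef, hYdef, fistaAux]
  have hT : ∀ k, T (k + 1) = (1 + Real.sqrt (1 + 4 * (T k) ^ 2)) / 2 := fun k => by
    simp [hTdef, fistaAux]
  have hY : ∀ k, Y (k + 1) = X (k + 1) + ((T k - 1) / T (k + 1)) • (X (k + 1) - X k) :=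
    fun k => by
      simp only [hXdef, hYdef, hTdef, fistaAux]
  have hT1 : ∀ k, 1 ≤ T k := by
    intro k
    induction k with
    | zero => rw [hT0]
    | succ n ih =>
      rw [hT n]
      have := tnext_ge (T n) (by linarith)
      linarith
  have hTlb : ∀ k : ℕ, (k : ℝ) / 2 + 1 ≤ T k := by
    intro k
    induction k with
    | zero => simp [hT0]
    | succ n ih =>
      rw [hT n]
      have := tnext_ge (T n) (by linarith [hT1 n])
      push_cast
      linarith
  have hTrec : ∀ k, (T (k + 1)) ^ 2 = T (k + 1) + (T k) ^ 2 := fun k => by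
    rw [hT k]; exact tnext_sq (T k)
  -- key inequality specialized
  have key : ∀ z x : Fin d → ℝ,
      L * fdot (proxL A y lam L z - x) (proxL A y lam L z - x) + 2 * F (proxL A y lam L z)
        ≤ L * fdot (z - x) (z - x) + 2 * F x := by
    intro z x
    have := keylem A y lam L hlam hL hquad z x
    rw [hFG x, hFG (proxL A y lam L z)]
    linarith
  -- energy induction
  have hE : ∀ j, 2 * (T j) ^ 2 * (F (X (j + 1)) - F xstar)
      + L * fdot (T j • X (j + 1) - (T j - 1) • X j - xstar)
          (T j • X (j + 1) - (T j - 1) • X j - xstar)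
      ≤ L * fdot (x0 - xstar) (x0 - xstar) := by
    intro j
    induction j with
    | zero =>
      have K := key (Y 0) xstar
      rw [← hX 0, hY0] at K
      have hV : T 0 • X 1 - (T 0 - 1) • X 0 - xstar = X 1 - xstar := by
        rw [hT0]; ext i; simp
      rw [hV, hT0]
      have hm := hmin (X 1)
      linarith
    | succ j ih =>
      have K1 := key (Y (j + 1)) (X (j + 1))
      have K2 := key (Y (j + 1)) xstar
      rw [← hX (j + 1)] at K1 K2
      set t := T (j + 1) with ht
      set told := T j with htold
      have ht1 : 1 ≤ t := hT1 (j + 1)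
      have htold1 : 1 ≤ told := hT1 j
      have hsub : told ^ 2 = t ^ 2 - t := by
        have := hTrec j
        linarith
      have hyid : t • Y (j + 1) - (t - 1) • X (j + 1) - xstar
          = told • X (j + 1) - (told - 1) • X j - xstar := by
        rw [hY j, ← ht, ← htold]
        ext i
        simp only [Pi.sub_apply, Pi.add_apply, Pi.smul_apply, smul_eq_mul]
        have htne : t ≠ 0 := by linarith
        field_simp
        ring
      have hid := idlem t (X (j + 1)) (X (j + 2)) (Y (j + 1)) xstar
      rw [hyid] at hid
      have hidL : L * (t * ((t - 1) * (fdot (X (j + 2) - X (j + 1)) (X (j + 2) - X (j + 1))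
            - fdot (Y (j + 1) - X (j + 1)) (Y (j + 1) - X (j + 1)))
          + (fdot (X (j + 2) - xstar) (X (j + 2) - xstar)
            - fdot (Y (j + 1) - xstar) (Y (j + 1) - xstar))))
          = L * (fdot (t • X (j + 2) - (t - 1) • X (j + 1) - xstar)
              (t • X (j + 2) - (t - 1) • X (j + 1) - xstar)
            - fdot (told • X (j + 1) - (told - 1) • X j - xstar)
              (told • X (j + 1) - (told - 1) • X j - xstar)) := by
        rw [hid]
      have M1 := mul_le_mul_of_nonneg_left K1
        (mul_nonneg (by linarith : (0:ℝ) ≤ t) (by linarith : (0:ℝ) ≤ t - 1))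
      have M2 := mul_le_mul_of_nonneg_left K2 (by linarith : (0:ℝ) ≤ t)
      have step : 2 * t ^ 2 * (F (X (j + 2)) - F xstar)
          + L * fdot (t • X (j + 2) - (t - 1) • X (j + 1) - xstar)
              (t • X (j + 2) - (t - 1) • X (j + 1) - xstar)
          ≤ 2 * told ^ 2 * (F (X (j + 1)) - F xstar)
          + L * fdot (told • X (j + 1) - (told - 1) • X j - xstar)
              (told • X (j + 1) - (told - 1) • X j - xstar) := by
        rw [hsub]
        nlinarith [M1, M2, hidL]
      linarith
  -- conclude
  intro k hk
  obtain ⟨j, rfl⟩ : ∃ j, k = j + 1 := ⟨k - 1, (Nat.succ_pred_eq_of_pos hk).symm⟩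
  have hEj := hE j
  have hVnn : 0 ≤ L * fdot (T j • X (j + 1) - (T j - 1) • X j - xstar)
      (T j • X (j + 1) - (T j - 1) • X j - xstar) :=
    mul_nonneg hL.le (fdot_nonneg _)
  have hdrop : 2 * (T j) ^ 2 * (F (X (j + 1)) - F xstar)
      ≤ L * fdot (x0 - xstar) (x0 - xstar) := by linarith
  have hfista : fista A y lam L x0 (j + 1) = X (j + 1) := rfl
  rw [hfista, l2norm_sq]
  have hδ : 0 ≤ F (X (j + 1)) - F xstar := by linarith [hmin (X (j + 1))]
  have hTj := hTlb j
  have hT1j := hT1 j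
  have hcast : ((↑(j + 1) : ℝ) + 1) = (j : ℝ) + 2 := by push_cast; ring
  rw [hcast, le_div_iff₀ (by positivity : (0:ℝ) < ((j:ℝ) + 2) ^ 2)]
  have hsq : ((j:ℝ) + 2) ^ 2 ≤ 4 * (T j) ^ 2 := by nlinarith [hTj, hT1j]
  have hmul := mul_le_mul_of_nonneg_left hsq hδ
  linarith [hdrop, hmul]
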